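/- Let G be a finitely generated group and k ≥ 1. Then G preforms the free group F_k on Fin k (i.e., G ⊑ F_k) if and only if G admits a generating tuple of size k and G has no k-almost-identity. -/

import Mathlib

open Subgroup

lemma freeGroup_exp {S : Type*} [Subsingleton S] (s₀ : S) (x : FreeGroup S) :
    x = FreeGroup.of s₀ ^
      (Multiplicative.toAdd (FreeGroup.lift (fun _ : S => Multiplicative.ofAdd (1 : ℤ)) x)) := by
  induction x using FreeGroup.induction_on with
  | C1 => simp
  | of s =>
      rw [Subsingleton.elim s s₀]
      simp only [show (pure s₀ : FreeGroup S) = FreeGroup.of s₀ from rfl, FreeGroup.lift_apply_of]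
      simp
  | inv_of s _ =>
      rw [Subsingleton.elim s s₀]
      simp only [show (pure s₀ : FreeGroup S) = FreeGroup.of s₀ from rfl, map_inv,
        FreeGroup.lift_apply_of]
      simp [zpow_neg]
  | mul x y hx hy =>
      rw [map_mul, toAdd_mul, zpow_add]
      exact congrArg₂ (· * ·) hx hy

lemma freeGroup_subsingleton_lift_injective {S : Type*} [Subsingleton S] [Nonempty S] :
    Function.Injective (FreeGroup.lift (fun _ : S => Multiplicative.ofAdd (1 : ℤ))) := by
  intro x y h
  rw [freeGroup_exp (Classical.arbitrary S) x, freeGroup_exp (Classical.arbitrary S) y, h]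

lemma commute_exists_common {α : Type*} {a b : FreeGroup α}
    (hab : Commute a b) (ha : a ≠ 1) (hb : b ≠ 1) :
    ∃ x : FreeGroup α, x ≠ 1 ∧ x ∈ Subgroup.zpowers a ∧ x ∈ Subgroup.zpowers b := by
  classical
  set H : Subgroup (FreeGroup α) := Subgroup.closure {a, b} with hH
  have haH : a ∈ H := Subgroup.subset_closure (by simp)
  have hbH : b ∈ H := Subgroup.subset_closure (by simp)
  have hcomm : ∀ x ∈ H, ∀ y ∈ H, Commute x y := by
    intro x hx y hy
    refine Subgroup.closure_induction₂
      (p := fun x y _ _ => Commute x y) ?_ ?_ ?_ ?_ ?_ ?_ ?_ hx hy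
    · rintro x y (rfl | rfl) (rfl | rfl)
      exacts [Commute.refl _, hab, hab.symm, Commute.refl _]
    · exact fun x _ => Commute.one_left x
    · exact fun x _ => Commute.one_right x
    · exact fun x y z _ _ _ h1 h2 => h1.mul_left h2
    · exact fun y z x _ _ _ h1 h2 => h1.mul_right h2
    · exact fun x y _ _ h => h.inv_left
    · exact fun x y _ _ h => h.inv_right
  have hHcomm : ∀ x y : H, x * y = y * x := by
    intro x y
    exact Subtype.ext (hcomm x x.2 y y.2)
  -- H is a free group (Nielsen–Schreier)
  have hSsub : Subsingleton (IsFreeGroup.Generators H) := by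
    by_contra hns
    rw [not_subsingleton_iff_nontrivial] at hns
    obtain ⟨s, t, hst⟩ := (exists_pair_ne (IsFreeGroup.Generators H))
    set F : H →* Equiv.Perm (Fin 3) :=
      IsFreeGroup.lift (fun x => if x = s then Equiv.swap 0 1 else Equiv.swap 0 2)
    have h1 : F (IsFreeGroup.of s) = Equiv.swap 0 1 := by
      rw [IsFreeGroup.lift_of]; simp
    have h2 : F (IsFreeGroup.of t) = Equiv.swap 0 2 := by
      rw [IsFreeGroup.lift_of]; simp [hst.symm]
    have := congrArg F (hHcomm (IsFreeGroup.of s) (IsFreeGroup.of t))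
    rw [map_mul, map_mul, h1, h2] at this
    exact absurd this (by decide)
  -- map to ℤ
  set e : H ≃* FreeGroup (IsFreeGroup.Generators H) := IsFreeGroup.toFreeGroup H
  have hSne : Nonempty (IsFreeGroup.Generators H) := by
    by_contra hne
    have : ∀ x : FreeGroup (IsFreeGroup.Generators H), x = 1 := by
      intro x
      induction x using FreeGroup.induction_on with
      | C1 => rfl
      | of s => exact absurd ⟨s⟩ hne
      | inv_of s _ => exact absurd ⟨s⟩ hne
      | mul x y hx hy => rw [hx, hy, one_mul]
    have : (⟨a, haH⟩ : H) = 1 := by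
      have := this (e ⟨a, haH⟩)
      have := congrArg e.symm this
      simpa using this
    exact ha (by simpa using congrArg Subtype.val this)
  set φ : H →* Multiplicative ℤ :=
    (FreeGroup.lift (fun _ : IsFreeGroup.Generators H => Multiplicative.ofAdd (1 : ℤ))).comp
      e.toMonoidHom
  have hφinj : Function.Injective φ := fun x y h =>
    e.injective (freeGroup_subsingleton_lift_injective h)
  set a' : H := ⟨a, haH⟩
  set b' : H := ⟨b, hbH⟩
  set p : ℤ := Multiplicative.toAdd (φ a') with hp
  set q : ℤ := Multiplicative.toAdd (φ b') with hq
  have hp0 : p ≠ 0 := by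
    intro h
    apply ha
    have : φ a' = 1 := by
      rw [← ofAdd_toAdd (φ a'), ← hp, h, ofAdd_zero]
    have : a' = 1 := hφinj (by rw [this, map_one])
    exact congrArg Subtype.val this
  have hq0 : q ≠ 0 := by
    intro h
    apply hb
    have : φ b' = 1 := by
      rw [← ofAdd_toAdd (φ b'), ← hq, h, ofAdd_zero]
    have : b' = 1 := hφinj (by rw [this, map_one])
    exact congrArg Subtype.val this
  have key : a' ^ q = b' ^ p := by
    apply hφinj
    rw [map_zpow, map_zpow]
    apply Multiplicative.toAdd.injective
    rw [toAdd_zpow, toAdd_zpow, ← hp, ← hq, smul_eq_mul, smul_eq_mul, mul_comm]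
  refine ⟨a ^ q, ?_, ⟨q, rfl⟩, ⟨p, ?_⟩⟩
  · intro h
    have : a' ^ q = 1 := Subtype.ext (by simpa [a'] using h)
    have := congrArg φ this
    rw [map_zpow, map_one] at this
    have := congrArg Multiplicative.toAdd this
    rw [toAdd_zpow, ← hp, smul_eq_mul] at this
    simp only [toAdd_one] at this
    exact mul_ne_zero hq0 hp0 this
  · have := congrArg Subtype.val key
    simpa using this.symm

lemma exists_ne_one_mem_inf {α : Type*} {N M : Subgroup (FreeGroup α)}
    [hN : N.Normal] [hM : M.Normal] {n m : FreeGroup α}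
    (hn : n ∈ N) (hm : m ∈ M) (hn1 : n ≠ 1) (hm1 : m ≠ 1) :
    ∃ x : FreeGroup α, x ≠ 1 ∧ x ∈ N ∧ x ∈ M := by
  by_cases hc : Commute n m
  · obtain ⟨x, hx1, ⟨i, hi⟩, ⟨j, hj⟩⟩ := commute_exists_common hc hn1 hm1
    exact ⟨x, hx1, hi ▸ N.zpow_mem hn i, hj ▸ M.zpow_mem hm j⟩
  · refine ⟨n * m * n⁻¹ * m⁻¹, ?_, ?_, ?_⟩
    · intro h
      exact hc (commutatorElement_eq_one_iff_commute.mp h)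
    · have : n * m * n⁻¹ * m⁻¹ = n * (m * n⁻¹ * m⁻¹) := by group
      rw [this]
      exact N.mul_mem hn (hN.conj_mem _ (N.inv_mem hn) m)
    · exact M.mul_mem (hM.conj_mem _ hm n) (M.inv_mem hm)

lemma freeGroup_of_ne_one {α : Type*} (x : α) : FreeGroup.of x ≠ (1 : FreeGroup α) := by
  classical
  intro h
  have := congrArg FreeGroup.toWord h
  rw [FreeGroup.toWord_of, FreeGroup.toWord_one] at this
  simp at this

lemma exists_ne_one_mem_normalClosures {k : ℕ} (hk : 1 ≤ k)
    (W : Finset (FreeGroup (Fin k))) (hW : (1 : FreeGroup (Fin k)) ∉ W) :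
    ∃ w₀, w₀ ≠ 1 ∧ ∀ w ∈ W, w₀ ∈ Subgroup.normalClosure {w} := by
  classical
  induction W using Finset.induction_on with
  | empty => exact ⟨FreeGroup.of ⟨0, hk⟩, freeGroup_of_ne_one _, by simp⟩
  | @insert w W hwW ih =>
      have hw1 : w ≠ 1 := fun h => hW (h ▸ Finset.mem_insert_self w W)
      obtain ⟨w₀, hw₀1, hw₀⟩ := ih (fun h => hW (Finset.mem_insert_of_mem h))
      obtain ⟨x, hx1, hxN, hxM⟩ :=
        exists_ne_one_mem_inf (N := Subgroup.normalClosure {w})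
          (M := Subgroup.normalClosure {w₀})
          (Subgroup.subset_normalClosure rfl) (Subgroup.subset_normalClosure rfl) hw1 hw₀1
      refine ⟨x, hx1, fun w' hw' => ?_⟩
      rcases Finset.mem_insert.mp hw' with rfl | hw'
      · exact hxN
      · exact Subgroup.normalClosure_le_normal
          (Set.singleton_subset_iff.mpr (hw₀ w' hw')) hxM

/-- `G` preforms `H` (written `G ⊑ H` in the paper): there is a marking `t` of `H` such
that for every radius `R` there is a marking `s` of `G` of the same size whose marked
Cayley graph agrees with that of `(H, t)` on the ball of radius `R`. -/
def Preforms (G : Type*) (H : Type*) [Group G] [Group H] : Prop :=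
  ∃ (k : ℕ) (t : Fin k → H), Subgroup.closure (Set.range t) = ⊤ ∧
    ∀ R : ℕ, ∃ s : Fin k → G, Subgroup.closure (Set.range s) = ⊤ ∧
      ∀ w : FreeGroup (Fin k), (FreeGroup.toWord w).length ≤ R →
        (FreeGroup.lift s w = 1 ↔ FreeGroup.lift t w = 1)

/-- A finitely generated group `G` preforms the free group `F_k` (for `k ≥ 1`) if and only
if `G` admits a generating tuple of size `k` and has no `k`-almost-identity. -/
theorem preforms_freeGroup_iff_no_almost_identity
    (G : Type*) [Group G] (hG : Group.FG G) (k : ℕ) (hk : 1 ≤ k) :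
    Preforms G (FreeGroup (Fin k)) ↔
      ((∃ g : Fin k → G, Subgroup.closure (Set.range g) = ⊤) ∧
        ∀ w : FreeGroup (Fin k), w ≠ 1 →
          ∃ g : Fin k → G, Subgroup.closure (Set.range g) = ⊤ ∧ FreeGroup.lift g w ≠ 1) := by
  classical
  constructor
  · rintro ⟨k', t, ht, hR⟩
    set π : FreeGroup (Fin k') →* FreeGroup (Fin k) := FreeGroup.lift t with hπdef
    have hπsurj : Function.Surjective π := by
      rw [← MonoidHom.range_eq_top, hπdef, FreeGroup.range_lift_eq_closure, ht]
    choose y hy using fun i : Fin k => hπsurj (FreeGroup.of i)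
    set σ : FreeGroup (Fin k) →* FreeGroup (Fin k') := FreeGroup.lift y with hσdef
    have hπσ : ∀ x, π (σ x) = x := by
      have : π.comp σ = MonoidHom.id _ := by
        ext i
        simp only [MonoidHom.comp_apply, MonoidHom.id_apply, hσdef, FreeGroup.lift_apply_of, hy]
      intro x
      exact DFunLike.congr_fun this x
    set n : Fin k' → FreeGroup (Fin k') :=
      fun i => FreeGroup.of i * (σ (π (FreeGroup.of i)))⁻¹ with hndef
    have hπn : ∀ i, π (n i) = 1 := by
      intro i
      rw [hndef]
      simp [hπσ]
    set R₀ : ℕ := Finset.univ.sup (fun i : Fin k' => ((n i).toWord).length) with hR₀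
    -- key: for suitable radii, the induced k-tuple generates G
    have key : ∀ R : ℕ, R₀ ≤ R → ∀ s : Fin k' → G,
        Subgroup.closure (Set.range s) = ⊤ →
        (∀ w : FreeGroup (Fin k'), (FreeGroup.toWord w).length ≤ R →
          (FreeGroup.lift s w = 1 ↔ FreeGroup.lift t w = 1)) →
        Subgroup.closure (Set.range fun i : Fin k => FreeGroup.lift s (σ (FreeGroup.of i))) = ⊤ := by
      intro R hRR s hs hiff
      set g : Fin k → G := fun i => FreeGroup.lift s (σ (FreeGroup.of i)) with hgdef
      have hcomp : (FreeGroup.lift s).comp σ = FreeGroup.lift g := by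
        ext i
        simp [hgdef, hσdef, FreeGroup.lift_apply_of]
      rw [eq_top_iff, ← hs, Subgroup.closure_le]
      rintro _ ⟨i, rfl⟩
      have hlen : ((n i).toWord).length ≤ R :=
        le_trans (Finset.le_sup (f := fun i : Fin k' => ((n i).toWord).length)
          (Finset.mem_univ i)) hRR
      have h1 : FreeGroup.lift s (n i) = 1 := (hiff (n i) hlen).mpr (hπn i)
      have hdecomp : FreeGroup.of i = n i * σ (π (FreeGroup.of i)) := by
        rw [hndef]
        group
      have : s i = FreeGroup.lift s (σ (π (FreeGroup.of i))) := by
        have h2 : FreeGroup.lift s (FreeGroup.of i)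
            = FreeGroup.lift s (n i * σ (π (FreeGroup.of i))) := by rw [← hdecomp]
        rw [map_mul, h1, one_mul] at h2
        rw [← h2]
        exact (FreeGroup.lift_apply_of).symm
      rw [this]
      have : FreeGroup.lift s (σ (π (FreeGroup.of i))) = FreeGroup.lift g (π (FreeGroup.of i)) := by
        rw [← hcomp]; rfl
      rw [this]
      have hrange : (FreeGroup.lift g).range = Subgroup.closure (Set.range g) :=
        FreeGroup.range_lift_eq_closure
      exact hrange ▸ MonoidHom.mem_range.mpr ⟨π (FreeGroup.of i), rfl⟩
    constructor
    · obtain ⟨s, hs, hiff⟩ := hR R₀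
      exact ⟨_, key R₀ le_rfl s hs hiff⟩
    · intro w hw
      set R : ℕ := max R₀ ((σ w).toWord).length with hRdef
      obtain ⟨s, hs, hiff⟩ := hR R
      refine ⟨_, key R (le_max_left _ _) s hs hiff, ?_⟩
      have hcomp : (FreeGroup.lift s).comp σ =
          FreeGroup.lift (fun i : Fin k => FreeGroup.lift s (σ (FreeGroup.of i))) := by
        ext i
        simp
      have hgw : FreeGroup.lift (fun i : Fin k => FreeGroup.lift s (σ (FreeGroup.of i))) w
          = FreeGroup.lift s (σ w) := by
        rw [← hcomp]; rfl
      rw [hgw]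
      intro h1
      have := (hiff (σ w) (le_max_right _ _)).mp h1
      rw [hπσ w] at this
      exact hw this
  · rintro ⟨⟨g₀, hg₀⟩, hAI⟩
    refine ⟨k, FreeGroup.of, FreeGroup.closure_range_of _, fun R => ?_⟩
    set Wset : Set (FreeGroup (Fin k)) :=
      {w | (FreeGroup.toWord w).length ≤ R ∧ w ≠ 1} with hWset
    have hfin : Wset.Finite := by
      have h1 : Set.Finite {l : List (Fin k × Bool) | l.length ≤ R} :=
        List.finite_length_le _ R
      have h2 : Wset ⊆ FreeGroup.toWord ⁻¹' {l : List (Fin k × Bool) | l.length ≤ R} :=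
        fun w hw => hw.1
      exact Set.Finite.subset (Set.Finite.preimage
        (Set.injOn_of_injective FreeGroup.toWord_injective) h1) h2
    have h1W : (1 : FreeGroup (Fin k)) ∉ hfin.toFinset := by
      rw [Set.Finite.mem_toFinset]
      exact fun h => h.2 rfl
    obtain ⟨w₀, hw₀1, hw₀⟩ := exists_ne_one_mem_normalClosures hk hfin.toFinset h1W
    obtain ⟨g, hg, hgw₀⟩ := hAI w₀ hw₀1
    refine ⟨g, hg, fun w hlen => ?_⟩
    rw [FreeGroup.lift_of_apply w]
    constructor
    · intro h1
      by_contra hw1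
      have hwW : w ∈ hfin.toFinset := (Set.Finite.mem_toFinset _).mpr ⟨hlen, hw1⟩
      have hker : Subgroup.normalClosure {w} ≤ (FreeGroup.lift g).ker :=
        Subgroup.normalClosure_le_normal (Set.singleton_subset_iff.mpr h1)
      exact hgw₀ (hker (hw₀ w hwW))
    · rintro rfl
      exact map_one _
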